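/- Let G be a finite group and H a non-trivial proper normal subgroup of G. For any odd integers k, l with 1 ≤ k, l ≤ |H|, H is a (0,k)-regular set of G if and only if H is a (0,l)-regular set of G. -/

import Mathlib

open Set

/-- An `(a,b)`-regular set in a graph: a nonempty proper subset `D` of the vertex set such
that every vertex in `D` has exactly `a` neighbours in `D` and every vertex outside `D`
has exactly `b` neighbours in `D`. -/
def IsRegularSet {V : Type*} (G : SimpleGraph V) (D : Set V) (a b : ℕ) : Prop :=
  D.Nonempty ∧ D ≠ Set.univ ∧
    (∀ v ∈ D, {u | G.Adj v u ∧ u ∈ D}.ncard = a) ∧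
    (∀ v ∉ D, {u | G.Adj v u ∧ u ∈ D}.ncard = b)

/-- The Cayley graph of a group with connection set `S`: `x ~ y` iff `y * x⁻¹ ∈ S`
(stated symmetrically; when `S` is inverse-closed and `1 ∉ S` this is the usual notion). -/
def cayley {G : Type*} [Group G] (S : Set G) : SimpleGraph G where
  Adj x y := x ≠ y ∧ y * x⁻¹ ∈ S ∧ x * y⁻¹ ∈ S
  symm := ⟨fun x y h => ⟨h.1.symm, h.2.2, h.2.1⟩⟩
  loopless := ⟨fun x h => h.1 rfl⟩

/-- `D` is a `(0,k)`-regular set of the group `G`: it is a `(0,k)`-regular set in some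
Cayley graph of `G` (with inverse-closed connection set avoiding the identity). -/
def IsRegularSetOfGroup (G : Type*) [Group G] (D : Set G) (k : ℕ) : Prop :=
  ∃ S : Set G, (1 : G) ∉ S ∧ (∀ s ∈ S, s⁻¹ ∈ S) ∧ IsRegularSet (cayley S) D 0 k


lemma cayley_adj {G : Type*} [Group G] (S : Set G) (x y : G) :
    (cayley S).Adj x y ↔ x ≠ y ∧ y * x⁻¹ ∈ S ∧ x * y⁻¹ ∈ S := Iff.rfl

-- parity lemma
private lemma even_ncard_aux {G : Type*} [Group G] [Finite G] :
    ∀ n (A : Set G), A.ncard = n → (∀ x ∈ A, x⁻¹ ∈ A) → (∀ x ∈ A, x⁻¹ ≠ x) → Even n := by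
  intro n
  induction n using Nat.strong_induction_on with
  | _ n ih =>
    intro A hcard hinv hfix
    rcases A.eq_empty_or_nonempty with hA | ⟨x, hx⟩
    · simp [hA] at hcard; simp [← hcard]
    · have hx' : x⁻¹ ∈ A := hinv x hx
      have hne : x⁻¹ ≠ x := hfix x hx
      have hpair : ({x, x⁻¹} : Set G) ⊆ A := by
        intro y hy; rcases hy with rfl | hy
        · exact hx
        · simp at hy; subst hy; exact hx'
      have hpc : ({x, x⁻¹} : Set G).ncard = 2 := Set.ncard_pair hne.symm
      have h2n : 2 ≤ n := by
        rw [← hcard, ← hpc]; exact Set.ncard_le_ncard hpair A.toFinite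
      have hdiff : (A \ {x, x⁻¹}).ncard = n - 2 := by
        rw [Set.ncard_diff hpair ({x, x⁻¹} : Set G).toFinite, hcard, hpc]
      have hinv' : ∀ y ∈ A \ {x, x⁻¹}, y⁻¹ ∈ A \ {x, x⁻¹} := by
        rintro y ⟨hy, hy2⟩
        refine ⟨hinv y hy, ?_⟩
        intro hmem
        rcases hmem with h | h
        · exact hy2 (by simp [← h])
        · simp at h
          apply hy2
          have : y = x := by
            have := congrArg (·⁻¹) h; simpa using this
          simp [this]
      have hfix' : ∀ y ∈ A \ {x, x⁻¹}, y⁻¹ ≠ y := fun y hy => hfix y hy.1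
      have := ih (n - 2) (by omega) _ hdiff hinv' hfix'
      rcases this with ⟨m, hm⟩
      exact ⟨m + 1, by omega⟩

lemma exists_self_inv {G : Type*} [Group G] [Finite G] (A : Set G)
    (hinv : ∀ x ∈ A, x⁻¹ ∈ A) (hodd : Odd A.ncard) : ∃ x ∈ A, x⁻¹ = x := by
  by_contra h
  push_neg at h
  have := even_ncard_aux A.ncard A rfl hinv h
  exact (Nat.not_even_iff_odd.mpr hodd) this

lemma build_inv_subset {G : Type*} [Group G] [Finite G] (C : Set G)
    (hCinv : ∀ x ∈ C, x⁻¹ ∈ C) (x₀ : G) (hx₀ : x₀ ∈ C) (hfix : x₀⁻¹ = x₀) :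
    ∀ m : ℕ, 2 * m + 1 ≤ C.ncard → ∃ T ⊆ C, T.ncard = 2 * m + 1 ∧ ∀ x ∈ T, x⁻¹ ∈ T := by
  intro m
  induction m with
  | zero =>
    intro _
    exact ⟨{x₀}, by simpa using hx₀, by simp, by intro x hx; simp at hx; simp [hx, hfix]⟩
  | succ m ih =>
    intro hle
    obtain ⟨T, hTC, hTcard, hTinv⟩ := ih (by omega)
    have hcomp : 2 ≤ (C \ T).ncard := by
      rw [Set.ncard_diff hTC T.toFinite, hTcard]; omega
    have key : ∃ y z, y ∈ C \ T ∧ z ∈ C \ T ∧ y ≠ z ∧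
        y⁻¹ ∈ ({y, z} : Set G) ∧ z⁻¹ ∈ ({y, z} : Set G) := by
      by_cases hall : ∀ w ∈ C \ T, w⁻¹ = w
      · obtain ⟨y, hy, z, hz, hyz⟩ := (Set.one_lt_ncard (C \ T).toFinite).mp (by omega)
        exact ⟨y, z, hy, hz, hyz, by simp [hall y hy], by simp [hall z hz]⟩
      · push_neg at hall
        obtain ⟨y, hy, hyne⟩ := hall
        have hyi : y⁻¹ ∈ C \ T := by
          refine ⟨hCinv y hy.1, fun hm => hy.2 ?_⟩
          simpa using hTinv _ hm
        exact ⟨y, y⁻¹, hy, hyi, fun h => hyne h.symm, by simp, by simp⟩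
    obtain ⟨y, z, hy, hz, hyz, hyi, hzi⟩ := key
    refine ⟨insert y (insert z T), ?_, ?_, ?_⟩
    · intro w hw
      rcases hw with rfl | hw
      · exact hy.1
      · rcases hw with rfl | hw
        · exact hz.1
        · exact hTC hw
    · have hzT : z ∉ T := hz.2
      have hyT : y ∉ insert z T := by
        intro h; rcases h with h | h
        · exact hyz h
        · exact hy.2 h
      rw [Set.ncard_insert_of_notMem hyT, Set.ncard_insert_of_notMem hzT, hTcard]
      ring
    · intro x hx
      rcases hx with rfl | hx
      · rcases hyi with h | h
        · rw [h]; exact Set.mem_insert _ _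
        · simp at h; rw [h]; exact Set.mem_insert_of_mem _ (Set.mem_insert _ _)
      · rcases hx with rfl | hx
        · rcases hzi with h | h
          · rw [h]; exact Set.mem_insert _ _
          · simp at h; rw [h]; exact Set.mem_insert_of_mem _ (Set.mem_insert _ _)
        · exact Set.mem_insert_of_mem _ (Set.mem_insert_of_mem _ (hTinv x hx))

lemma aux_step {G : Type*} [Group G] [Fintype G] (H : Subgroup G) [hN : H.Normal]
    (htop : H ≠ ⊤) (k l : ℕ) (hko : Odd k) (hlH : l ≤ Nat.card H) (hlo : Odd l) :
    IsRegularSetOfGroup G (H : Set G) k → IsRegularSetOfGroup G (H : Set G) l := by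
  rintro ⟨S, hS1, hSinv, -, -, -, hk⟩
  classical
  set cos : G ⧸ H → Set G := fun q => {x : G | (x : G ⧸ H) = q} with hcos
  have fact1 : ∀ q : G ⧸ H, (cos q).ncard = Nat.card H := by
    intro q
    obtain ⟨g, rfl⟩ := QuotientGroup.mk_surjective q
    have himg : cos (g : G ⧸ H) = (fun h => g * h) '' (H : Set G) := by
      ext x
      simp only [hcos, Set.mem_setOf_eq, Set.mem_image]
      constructor
      · intro hx
        refine ⟨g⁻¹ * x, ?_, by group⟩
        exact QuotientGroup.eq.mp hx.symm
      · rintro ⟨h, hh, rfl⟩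
        rw [QuotientGroup.mk_mul, (QuotientGroup.eq_one_iff h).mpr hh, mul_one]
    rw [himg, Set.ncard_image_of_injective _ (mul_right_injective g),
      ← Nat.card_coe_set_eq]
    rfl
  have fact2 : ∀ q : G ⧸ H, q ≠ 1 → (S ∩ cos q).ncard = k := by
    intro q hq
    obtain ⟨g, rfl⟩ := QuotientGroup.mk_surjective q
    have hgH : g⁻¹ ∉ (H : Set G) := by
      intro h
      apply hq
      have h1 : ((g⁻¹ : G) : G ⧸ H) = 1 := (QuotientGroup.eq_one_iff _).mpr h
      rw [QuotientGroup.mk_inv] at h1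
      exact inv_eq_one.mp h1
    have himg : S ∩ cos (g : G ⧸ H)
        = (fun u => u * g) '' {u | (cayley S).Adj g⁻¹ u ∧ u ∈ (H : Set G)} := by
      ext s
      simp only [hcos, Set.mem_inter_iff, Set.mem_setOf_eq, Set.mem_image, cayley_adj]
      constructor
      · rintro ⟨hsS, hsq⟩
        refine ⟨s * g⁻¹, ⟨⟨?_, ?_, ?_⟩, ?_⟩, by group⟩
        · intro h
          have hs1 : s = 1 := by
            have h2 := congrArg (· * g) h
            simp at h2
            exact h2.symm
          exact hS1 (hs1 ▸ hsS)
        · have : s * g⁻¹ * (g⁻¹)⁻¹ = s := by group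
          rw [this]; exact hsS
        · have : g⁻¹ * (s * g⁻¹)⁻¹ = s⁻¹ := by group
          rw [this]; exact hSinv s hsS
        · have h1 : ((s * g⁻¹ : G) : G ⧸ H) = 1 := by
            rw [QuotientGroup.mk_mul, QuotientGroup.mk_inv, hsq, mul_inv_cancel]
          exact (QuotientGroup.eq_one_iff _).mp h1
      · rintro ⟨u, ⟨⟨hne, hu1, hu2⟩, huH⟩, rfl⟩
        constructor
        · have : u * (g⁻¹)⁻¹ = u * g := by group
          rw [this] at hu1; exact hu1
        · rw [QuotientGroup.mk_mul, (QuotientGroup.eq_one_iff u).mpr huH, one_mul]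
    rw [himg, Set.ncard_image_of_injective _ (mul_left_injective g)]
    exact hk g⁻¹ hgH
  have hchoice : ∀ q : G ⧸ H, ∃ T, T ⊆ cos q ∧ (q ≠ 1 → T.ncard = l) ∧
      (q⁻¹ = q → ∀ x ∈ T, x⁻¹ ∈ T) := by
    intro q
    by_cases hq : q = 1
    · exact ⟨∅, by simp, fun h => absurd hq h, by simp⟩
    · by_cases hqs : q⁻¹ = q
      · have hAinv : ∀ x ∈ S ∩ cos q, x⁻¹ ∈ S ∩ cos q := by
          rintro x ⟨hxS, hxq⟩
          refine ⟨hSinv x hxS, ?_⟩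
          show ((x⁻¹ : G) : G ⧸ H) = q
          rw [QuotientGroup.mk_inv, show ((x : G) : G ⧸ H) = q from hxq, hqs]
        have hodd : Odd (S ∩ cos q).ncard := by rw [fact2 q hq]; exact hko
        obtain ⟨x₀, hx₀, hfix⟩ := exists_self_inv _ hAinv hodd
        have hCinv : ∀ x ∈ cos q, x⁻¹ ∈ cos q := by
          intro x hx
          show ((x⁻¹ : G) : G ⧸ H) = q
          rw [QuotientGroup.mk_inv, show ((x : G) : G ⧸ H) = q from hx, hqs]
        obtain ⟨m, hm⟩ := hlo
        obtain ⟨T, hT1, hT2, hT3⟩ := build_inv_subset (cos q) hCinv x₀ hx₀.2 hfix m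
          (by rw [fact1 q]; omega)
        refine ⟨T, hT1, fun _ => by omega, fun _ => hT3⟩
      · obtain ⟨T, hT1, hT2⟩ := Set.exists_subset_card_eq
          (show l ≤ (cos q).ncard by rw [fact1 q]; exact hlH)
        exact ⟨T, hT1, fun _ => hT2, fun h => absurd h hqs⟩
  choose T₀ hT₀sub hT₀card hT₀inv using hchoice
  obtain ⟨n, ⟨e⟩⟩ := Finite.exists_equiv_fin (G ⧸ H)
  set T : G ⧸ H → Set G :=
    fun q => if (e q : ℕ) ≤ (e q⁻¹ : ℕ) then T₀ q else {x | x⁻¹ ∈ T₀ q⁻¹} with hT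
  have hTsub : ∀ q, T q ⊆ cos q := by
    intro q x hx
    simp only [hT] at hx
    split_ifs at hx with h
    · exact hT₀sub q hx
    · have h1 : ((x⁻¹ : G) : G ⧸ H) = q⁻¹ := hT₀sub q⁻¹ hx
      rw [QuotientGroup.mk_inv] at h1
      exact inv_injective h1
  have hTcard : ∀ q, q ≠ 1 → (T q).ncard = l := by
    intro q hq
    simp only [hT]
    split_ifs with h
    · exact hT₀card q hq
    · have himg : {x : G | x⁻¹ ∈ T₀ q⁻¹} = (fun x => x⁻¹) '' T₀ q⁻¹ := by
        ext x
        simp only [Set.mem_setOf_eq, Set.mem_image]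
        constructor
        · intro hx; exact ⟨x⁻¹, hx, by simp⟩
        · rintro ⟨y, hy, rfl⟩; simpa using hy
      rw [himg, Set.ncard_image_of_injective _ inv_injective]
      exact hT₀card q⁻¹ (by simpa using hq)
  have hTinv : ∀ q, ∀ x ∈ T q, x⁻¹ ∈ T q⁻¹ := by
    intro q x hx
    by_cases h1 : (e q : ℕ) ≤ (e q⁻¹ : ℕ) <;> by_cases h2 : (e q⁻¹ : ℕ) ≤ (e q : ℕ)
    · have hqq : q⁻¹ = q := by
        have h3 : e q = e q⁻¹ := Fin.ext (le_antisymm h1 h2)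
        exact (e.injective h3).symm
      simp only [hT, hqq] at hx ⊢
      rw [if_pos le_rfl] at hx ⊢
      exact hT₀inv q hqq x hx
    · simp only [hT, inv_inv] at hx ⊢
      rw [if_pos h1] at hx
      rw [if_neg h2]
      show x⁻¹⁻¹ ∈ T₀ q
      simpa using hx
    · simp only [hT, inv_inv] at hx ⊢
      rw [if_neg h1] at hx
      rw [if_pos h2]
      exact hx
    · omega
  set S' : Set G := {x : G | (x : G ⧸ H) ≠ 1 ∧ x ∈ T ((x : G) : G ⧸ H)} with hS'def
  have hS'1 : (1 : G) ∉ S' := by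
    intro h
    exact h.1 (by rw [QuotientGroup.mk_one])
  have hS'inv : ∀ s ∈ S', s⁻¹ ∈ S' := by
    rintro s ⟨hs1, hs2⟩
    constructor
    · rw [QuotientGroup.mk_inv]
      simpa using hs1
    · rw [QuotientGroup.mk_inv]
      exact hTinv _ s hs2
  have hS'cos : ∀ q : G ⧸ H, q ≠ 1 → S' ∩ cos q = T q := by
    intro q hq
    ext x
    constructor
    · rintro ⟨⟨hx1, hx2⟩, hxc⟩
      have hxc' : ((x : G) : G ⧸ H) = q := hxc
      rwa [hxc'] at hx2
    · intro hx
      have hxc : ((x : G) : G ⧸ H) = q := hTsub _ hx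
      exact ⟨⟨by rw [hxc]; exact hq, by rw [hxc]; exact hx⟩, hxc⟩
  refine ⟨S', hS'1, hS'inv, ⟨1, H.one_mem⟩, ?_, ?_, ?_⟩
  · intro h
    exact htop (Subgroup.coe_eq_univ.mp h)
  · intro v hv
    have hempty : {u | (cayley S').Adj v u ∧ u ∈ (H : Set G)} = ∅ := by
      ext u
      simp only [Set.mem_setOf_eq, Set.mem_empty_iff_false, iff_false, cayley_adj]
      rintro ⟨⟨hne, h1, h2⟩, huH⟩
      apply h1.1
      rw [QuotientGroup.mk_mul, QuotientGroup.mk_inv,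
        (QuotientGroup.eq_one_iff u).mpr huH,
        (QuotientGroup.eq_one_iff v).mpr hv, one_mul, inv_one]
    rw [hempty]
    exact Set.ncard_empty G
  · intro v hv
    have hq1 : ((v⁻¹ : G) : G ⧸ H) ≠ 1 := by
      rw [QuotientGroup.mk_inv]
      simp only [ne_eq, inv_eq_one]
      intro h
      exact hv ((QuotientGroup.eq_one_iff v).mp h)
    have himg : {u | (cayley S').Adj v u ∧ u ∈ (H : Set G)}
        = (fun s => s * v) '' (S' ∩ cos ((v⁻¹ : G) : G ⧸ H)) := by
      ext u
      simp only [Set.mem_setOf_eq, Set.mem_image, Set.mem_inter_iff, cayley_adj]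
      constructor
      · rintro ⟨⟨hne, h1, h2⟩, huH⟩
        refine ⟨u * v⁻¹, ⟨h1, ?_⟩, by group⟩
        show ((u * v⁻¹ : G) : G ⧸ H) = ((v⁻¹ : G) : G ⧸ H)
        rw [QuotientGroup.mk_mul, (QuotientGroup.eq_one_iff u).mpr huH, one_mul]
      · rintro ⟨s, ⟨hsS', hsc⟩, rfl⟩
        have hsne : s ≠ 1 := by rintro rfl; exact hS'1 hsS'
        refine ⟨⟨?_, ?_, ?_⟩, ?_⟩
        · intro h
          apply hsne
          have h' : s * v = 1 * v := by rw [one_mul, ← h]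
          exact mul_right_cancel h'
        · have : s * v * v⁻¹ = s := by group
          rw [this]; exact hsS'
        · have : v * (s * v)⁻¹ = s⁻¹ := by group
          rw [this]; exact hS'inv s hsS'
        · have h1 : ((s * v : G) : G ⧸ H) = 1 := by
            have hsc' : ((s : G) : G ⧸ H) = ((v⁻¹ : G) : G ⧸ H) := hsc
            rw [QuotientGroup.mk_mul, hsc', QuotientGroup.mk_inv, inv_mul_cancel]
          exact (QuotientGroup.eq_one_iff _).mp h1
    rw [himg, Set.ncard_image_of_injective _ (mul_left_injective v),
      hS'cos _ hq1]
    exact hTcard _ hq1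


theorem stmt12 {G : Type*} [Group G] [Fintype G] (H : Subgroup G) [H.Normal]
    (hbot : H ≠ ⊥) (htop : H ≠ ⊤) (k l : ℕ)
    (hk1 : 1 ≤ k) (hkH : k ≤ Nat.card H) (hko : Odd k)
    (hl1 : 1 ≤ l) (hlH : l ≤ Nat.card H) (hlo : Odd l) :
    IsRegularSetOfGroup G (H : Set G) k ↔ IsRegularSetOfGroup G (H : Set G) l := by
  constructor
  · exact aux_step H htop k l hko hlH hlo
  · exact aux_step H htop l k hlo hkH hko
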